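/- arXiv:1310.6817 — 6 statements merged into one kernel-verified Lean document; each statement's English description precedes it below -/
import Mathlib

section
/- For any two permutations f, g in S_n, the Kendall tau distance between f and g is at least the l1-distance between their factoradic representations: d_K(f,g) ≥ Σ_{i=1}^{n} |Φ(f)_i − Φ(g)_i|. -/
open Finset

/-- Kendall's tau distance: minimal number of adjacent transpositions
(in one-line notation, i.e. swaps of values in consecutive positions)
transforming `f` into `g`. -/
noncomputable def kendall {n : ℕ} (f g : Equiv.Perm (Fin n)) : ℕ :=
  sInf {m | ∃ l : List (Equiv.Perm (Fin n)), l.length = m ∧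
    (∀ s ∈ l, ∃ i j : Fin n, (i : ℕ) + 1 = (j : ℕ) ∧ s = Equiv.swap i j) ∧
    g = f * l.prod}

/-- The factoradic representation (0-indexed): `phi f i` counts values smaller
than `i` that appear to the right of `i` in the one-line notation of `f`. -/
noncomputable def phi {n : ℕ} (f : Equiv.Perm (Fin n)) (i : Fin n) : ℕ :=
  Set.ncard {j : Fin n | j < i ∧ f⁻¹ i < f⁻¹ j}

/-- `projUp hk f` is `f|^{[k]}`: keep only the values `0,…,k-1` of `f` and
relabel them to `Fin k`, preserving relative order of positions. -/
noncomputable def projUp {n k : ℕ} (hk : k ≤ n) (f : Equiv.Perm (Fin n)) :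
    Equiv.Perm (Fin k) := by
  classical
  let g : Fin k → Fin n := fun b => f⁻¹ (Fin.castLE hk b)
  have hg : Function.Injective g :=
    fun a b hab => Fin.castLE_injective hk (f⁻¹.injective hab)
  let s : Finset (Fin n) := Finset.univ.image g
  have hs : s.card = k := by
    rw [Finset.card_image_of_injective _ hg, Finset.card_univ, Fintype.card_fin]
  have hr : Set.range g = ↑s := by ext x; simp [s, g]
  exact ((Equiv.ofInjective g hg).trans
    ((Equiv.setCongr hr).trans (s.orderIsoOfFin hs).toEquiv.symm)).symm

/-- `projDown hk g` is `g|_{[k]}`: keep only the first `k` coordinates of `g`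
and relabel the values to `Fin k`, preserving relative order. -/
noncomputable def projDown {n k : ℕ} (hk : k ≤ n) (g : Equiv.Perm (Fin n)) :
    Equiv.Perm (Fin k) :=
  (projUp hk g⁻¹)⁻¹

/-- The ℓ∞ distance between permutations. -/
def dinf {n : ℕ} (f g : Equiv.Perm (Fin n)) : ℕ :=
  Finset.univ.sup (fun i : Fin n => ((f i : ℤ) - (g i : ℤ)).natAbs)
lemma swap_lt_iff {n : ℕ} (p q x y : Fin n) (hpq : (p:ℕ) + 1 = q)
    (h1 : ¬(x = p ∧ y = q)) (h2 : ¬(x = q ∧ y = p)) :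
    Equiv.swap p q x < Equiv.swap p q y ↔ x < y := by
  simp only [Equiv.swap_apply_def] at *
  split_ifs <;> simp only [Fin.lt_def, Fin.ext_iff, not_and] at * <;> omega

lemma phi_eq {n : ℕ} (f : Equiv.Perm (Fin n)) (i : Fin n) :
    phi f i = (univ.filter fun j => j < i ∧ f⁻¹ i < f⁻¹ j).card := by
  rw [phi]
  rw [show {j : Fin n | j < i ∧ f⁻¹ i < f⁻¹ j} =
    ↑(univ.filter fun j => j < i ∧ f⁻¹ i < f⁻¹ j) by ext j; simp]
  exact Set.ncard_coe_finset _

lemma mulswap_inv_apply {n : ℕ} (f : Equiv.Perm (Fin n)) (p q v : Fin n) :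
    (f * Equiv.swap p q)⁻¹ v = Equiv.swap p q (f⁻¹ v) := by
  simp [mul_inv_rev, Equiv.Perm.mul_apply]

lemma step {n : ℕ} (f : Equiv.Perm (Fin n)) (p q : Fin n) (hpq : (p:ℕ) + 1 = q) :
    ∑ k : Fin n, ((phi (f * Equiv.swap p q) k : ℤ) - (phi f k : ℤ)).natAbs ≤ 1 := by
  classical
  set a := f p with ha
  set b := f q with hb
  have hpq' : p ≠ q := by
    intro h; rw [h] at hpq; omega
  have hab : a ≠ b := fun h => hpq' (f.injective h)
  set m := max a b with hm
  set l := min a b with hl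
  have hlm : l < m := min_lt_max.mpr hab
  have key : (f⁻¹ m = p ∧ f⁻¹ l = q) ∨ (f⁻¹ m = q ∧ f⁻¹ l = p) := by
    rcases le_total a b with h | h
    · right
      constructor
      · rw [hm, max_eq_right h, hb]; simp
      · rw [hl, min_eq_left h, ha]; simp
    · left
      constructor
      · rw [hm, max_eq_left h, ha]; simp
      · rw [hl, min_eq_right h, hb]; simp
  -- phi unchanged off m
  have hoff : ∀ k : Fin n, k ≠ m → phi (f * Equiv.swap p q) k = phi f k := by
    intro k hk
    rw [phi_eq, phi_eq]
    congr 1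
    apply Finset.filter_congr
    intro j _
    by_cases hjk : j < k
    · simp only [hjk, true_and]
      rw [mulswap_inv_apply, mulswap_inv_apply]
      apply swap_lt_iff _ _ _ _ hpq
      · rintro ⟨h1, h2⟩
        apply hk
        have hk' : k = a := by rw [ha, ← h1]; simp
        have hj' : j = b := by rw [hb, ← h2]; simp
        rw [hk', hm]
        rw [hk', hj'] at hjk
        exact (max_eq_left hjk.le).symm
      · rintro ⟨h1, h2⟩
        apply hk
        have hk' : k = b := by rw [hb, ← h1]; simp
        have hj' : j = a := by rw [ha, ← h2]; simp
        rw [hk', hm]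
        rw [hk', hj'] at hjk
        exact (max_eq_right hjk.le).symm
    · simp [hjk]
  -- at m the two filters agree after erasing l
  have herase :
      ((univ.filter fun j => j < m ∧ (f * Equiv.swap p q)⁻¹ m < (f * Equiv.swap p q)⁻¹ j).erase l)
        = ((univ.filter fun j => j < m ∧ f⁻¹ m < f⁻¹ j).erase l) := by
    ext j
    simp only [Finset.mem_erase, Finset.mem_filter, Finset.mem_univ, true_and]
    have hiff : ∀ hjl : j ≠ l,
        ((f * Equiv.swap p q)⁻¹ m < (f * Equiv.swap p q)⁻¹ j ↔ f⁻¹ m < f⁻¹ j) := by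
      intro hjl
      rw [mulswap_inv_apply, mulswap_inv_apply]
      apply swap_lt_iff p q (f⁻¹ m) (f⁻¹ j) hpq
      · rintro ⟨h1, h2⟩
        rcases key with ⟨_, hk2⟩ | ⟨hk1, _⟩
        · exact hjl (f⁻¹.injective (h2.trans hk2.symm))
        · exact hpq' (h1.symm.trans hk1)
      · rintro ⟨h1, h2⟩
        rcases key with ⟨hk1, _⟩ | ⟨_, hk2⟩
        · exact hpq' (hk1.symm.trans h1)
        · exact hjl (f⁻¹.injective (h2.trans hk2.symm))
    constructor
    · rintro ⟨hjl, hjm, hcmp⟩; exact ⟨hjl, hjm, (hiff hjl).mp hcmp⟩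
    · rintro ⟨hjl, hjm, hcmp⟩; exact ⟨hjl, hjm, (hiff hjl).mpr hcmp⟩
  have hbound : ∀ S : Finset (Fin n), (S.erase l).card ≤ S.card ∧ S.card ≤ (S.erase l).card + 1 := by
    intro S
    by_cases hls : l ∈ S
    · rw [Finset.card_erase_of_mem hls]
      have := Finset.card_pos.mpr ⟨l, hls⟩
      omega
    · rw [Finset.erase_eq_of_notMem hls]; omega
  calc ∑ k : Fin n, ((phi (f * Equiv.swap p q) k : ℤ) - (phi f k : ℤ)).natAbs
      = ((phi (f * Equiv.swap p q) m : ℤ) - (phi f m : ℤ)).natAbs := by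
        apply Finset.sum_eq_single_of_mem m (Finset.mem_univ m)
        intro k _ hk
        rw [hoff k hk]
        simp
    _ ≤ 1 := by
        rw [phi_eq, phi_eq]
        obtain ⟨h1, h2⟩ := hbound (univ.filter fun j => j < m ∧ (f * Equiv.swap p q)⁻¹ m < (f * Equiv.swap p q)⁻¹ j)
        obtain ⟨h3, h4⟩ := hbound (univ.filter fun j => j < m ∧ f⁻¹ m < f⁻¹ j)
        rw [herase] at h1 h2
        omega

lemma list_bound {n : ℕ} (l : List (Equiv.Perm (Fin n)))
    (hl : ∀ s ∈ l, ∃ p q : Fin n, (p:ℕ) + 1 = q ∧ s = Equiv.swap p q) :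
    ∀ f : Equiv.Perm (Fin n),
      ∑ k : Fin n, ((phi (f * l.prod) k : ℤ) - (phi f k : ℤ)).natAbs ≤ l.length := by
  induction l with
  | nil => intro f; simp
  | cons s t ih =>
    intro f
    obtain ⟨p, q, hpq, rfl⟩ := hl s List.mem_cons_self
    have h2 := ih (fun x hx => hl x (List.mem_cons_of_mem _ hx)) (f * Equiv.swap p q)
    have h1 := step f p q hpq
    have htri : ∀ k : Fin n,
        ((phi (f * (Equiv.swap p q :: t).prod) k : ℤ) - (phi f k : ℤ)).natAbs ≤
          ((phi (f * Equiv.swap p q * t.prod) k : ℤ) - (phi (f * Equiv.swap p q) k : ℤ)).natAbs +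
          ((phi (f * Equiv.swap p q) k : ℤ) - (phi f k : ℤ)).natAbs := by
      intro k
      rw [List.prod_cons, ← mul_assoc]
      calc ((phi (f * Equiv.swap p q * t.prod) k : ℤ) - (phi f k : ℤ)).natAbs
          = (((phi (f * Equiv.swap p q * t.prod) k : ℤ) - (phi (f * Equiv.swap p q) k : ℤ)) +
            ((phi (f * Equiv.swap p q) k : ℤ) - (phi f k : ℤ))).natAbs := by ring_nf
        _ ≤ _ := Int.natAbs_add_le _ _
    calc ∑ k : Fin n, ((phi (f * (Equiv.swap p q :: t).prod) k : ℤ) - (phi f k : ℤ)).natAbs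
        ≤ ∑ k : Fin n,
          (((phi (f * Equiv.swap p q * t.prod) k : ℤ) - (phi (f * Equiv.swap p q) k : ℤ)).natAbs +
           ((phi (f * Equiv.swap p q) k : ℤ) - (phi f k : ℤ)).natAbs) :=
          Finset.sum_le_sum fun k _ => htri k
      _ = (∑ k : Fin n, ((phi (f * Equiv.swap p q * t.prod) k : ℤ) -
            (phi (f * Equiv.swap p q) k : ℤ)).natAbs) +
          ∑ k : Fin n, ((phi (f * Equiv.swap p q) k : ℤ) - (phi f k : ℤ)).natAbs :=
          Finset.sum_add_distrib
      _ ≤ t.length + 1 := Nat.add_le_add h2 h1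
      _ = (Equiv.swap p q :: t).length := by simp [Nat.add_comm]

/-- `d_K(f,g) ≥ Σ_i |Φ(f)_i − Φ(g)_i|`. -/
theorem stmt0 (n : ℕ) (f g : Equiv.Perm (Fin n)) :
    ∑ i : Fin n, ((phi f i : ℤ) - (phi g i : ℤ)).natAbs ≤ kendall f g := by
  have hne : {m | ∃ l : List (Equiv.Perm (Fin n)), l.length = m ∧
      (∀ s ∈ l, ∃ i j : Fin n, (i : ℕ) + 1 = (j : ℕ) ∧ s = Equiv.swap i j) ∧
      g = f * l.prod}.Nonempty := by
    cases n with
    | zero =>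
      refine ⟨0, [], rfl, by simp, ?_⟩
      have : f = g := Equiv.ext fun x => x.elim0
      simp [this]
    | succ k =>
      have hmem : f⁻¹ * g ∈ Submonoid.closure
          (Set.range fun i : Fin k => Equiv.swap i.castSucc i.succ) := by
        rw [Equiv.Perm.mclosure_swap_castSucc_succ]; trivial
      obtain ⟨lst, hmem', hprod⟩ := Submonoid.exists_list_of_mem_closure hmem
      refine ⟨lst.length, lst, rfl, ?_, ?_⟩
      · intro s hs
        obtain ⟨i, rfl⟩ := hmem' s hs
        exact ⟨i.castSucc, i.succ, by simp, rfl⟩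
      · rw [hprod, ← mul_assoc, mul_inv_cancel, one_mul]
  have hmem := Nat.sInf_mem hne
  obtain ⟨lst, hlen, hadj, hg⟩ := hmem
  rw [kendall, ← hlen]
  have := list_bound lst hadj f
  rw [← hg] at this
  calc ∑ i : Fin n, ((phi f i : ℤ) - (phi g i : ℤ)).natAbs
      = ∑ i : Fin n, ((phi g i : ℤ) - (phi f i : ℤ)).natAbs := by
        apply Finset.sum_congr rfl
        intro i _
        rw [← Int.natAbs_neg, neg_sub]
    _ ≤ lst.length := this
end

section
/- For all n ≥ 1 and 0 ≤ r ≤ n(n−1)/2, the size of the ball of radius r in S_n under Kendall's tau metric is at most binom(n+r−1, n−1). -/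
open Finset

/-- number of inversions -/
noncomputable def invc {n : ℕ} (h : Equiv.Perm (Fin n)) : ℕ :=
  (Finset.univ.filter fun p : Fin n × Fin n => p.1 < p.2 ∧ h p.2 < h p.1).card

lemma swap_val {n : ℕ} (i j x : Fin n) : ((Equiv.swap i j x : Fin n) : ℕ) =
    if x = i then (j:ℕ) else if x = j then (i:ℕ) else (x:ℕ) := by
  rw [Equiv.swap_apply_def]; split_ifs with h1 h2 <;> rfl

lemma swap_mono {n : ℕ} {i j a b : Fin n} (hij : (i:ℕ)+1 = j) (hab : a < b)
    (hne : ¬((a:ℕ) = i ∧ (b:ℕ) = j)) : Equiv.swap i j a < Equiv.swap i j b := by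
  rw [Fin.lt_def] at hab ⊢
  rw [swap_val, swap_val]
  split_ifs with h1 h2 h3 h4 <;> simp only [Fin.ext_iff] at * <;> omega

lemma swap_pair_ne {n : ℕ} {i j a b : Fin n} (hij : (i:ℕ)+1 = j) (hab : a < b)
    (hne : ¬((a:ℕ) = i ∧ (b:ℕ) = j)) :
    (Equiv.swap i j a, Equiv.swap i j b) ≠ (i, j) := by
  intro hc
  simp only [Prod.mk.injEq] at hc
  have ha := congrArg (Equiv.swap i j) hc.1
  rw [Equiv.swap_apply_self, Equiv.swap_apply_left] at ha
  have hb := congrArg (Equiv.swap i j) hc.2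
  rw [Equiv.swap_apply_self, Equiv.swap_apply_right] at hb
  rw [Fin.lt_def] at hab
  subst ha; subst hb
  omega

lemma erase_maps {n : ℕ} (p : Equiv.Perm (Fin n)) {i j : Fin n} (hij : (i:ℕ)+1 = j) :
    ∀ q ∈ ((Finset.univ.filter fun p' : Fin n × Fin n =>
      p'.1 < p'.2 ∧ (p * Equiv.swap i j) p'.2 < (p * Equiv.swap i j) p'.1).erase (i, j)),
      (Equiv.swap i j q.1, Equiv.swap i j q.2) ∈ (Finset.univ.filter
        fun p' : Fin n × Fin n => p'.1 < p'.2 ∧ p p'.2 < p p'.1) := by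
  rintro ⟨a, b⟩ hq
  rw [Finset.mem_erase] at hq
  obtain ⟨hne0, hq⟩ := hq
  rw [Finset.mem_filter] at hq
  simp only [Finset.mem_filter, Finset.mem_univ, true_and, Equiv.Perm.mul_apply] at hq
  have hne : ¬((a:ℕ) = i ∧ (b:ℕ) = j) := by
    intro hc
    exact hne0 (Prod.ext (Fin.ext hc.1) (Fin.ext hc.2))
  have hm := swap_mono hij hq.1 hne
  simp only [Finset.mem_filter, Finset.mem_univ, true_and]
  exact ⟨hm, hq.2⟩

lemma swap_injOn {n : ℕ} (i j : Fin n) (S : Finset (Fin n × Fin n)) :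
    Set.InjOn (fun q : Fin n × Fin n => (Equiv.swap i j q.1, Equiv.swap i j q.2)) ↑S := by
  intro x _ y _ hxy
  simp only [Prod.mk.injEq] at hxy
  exact Prod.ext ((Equiv.swap i j).injective hxy.1) ((Equiv.swap i j).injective hxy.2)

lemma invc_mul_swap_le {n : ℕ} (p : Equiv.Perm (Fin n)) {i j : Fin n}
    (hij : (i:ℕ)+1 = j) : invc (p * Equiv.swap i j) ≤ invc p + 1 := by
  classical
  set F' := (Finset.univ.filter fun p' : Fin n × Fin n =>
      p'.1 < p'.2 ∧ (p * Equiv.swap i j) p'.2 < (p * Equiv.swap i j) p'.1) with hF'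
  have h1 : F' ⊆ insert (i, j) (F'.erase (i, j)) :=
    Finset.subset_insert_iff.mpr (Finset.Subset.refl _)
  have h2 : (F'.erase (i, j)).card ≤ invc p :=
    Finset.card_le_card_of_injOn _ (erase_maps p hij) (swap_injOn i j _)
  calc invc (p * Equiv.swap i j) = F'.card := rfl
    _ ≤ (insert (i, j) (F'.erase (i, j))).card := Finset.card_le_card h1
    _ ≤ (F'.erase (i, j)).card + 1 := Finset.card_insert_le _ _
    _ ≤ invc p + 1 := by omega

lemma invc_mul_swap_lt {n : ℕ} (p : Equiv.Perm (Fin n)) {i j : Fin n}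
    (hij : (i:ℕ)+1 = j) (hdesc : p j < p i) :
    invc (p * Equiv.swap i j) < invc p := by
  classical
  set F' := (Finset.univ.filter fun p' : Fin n × Fin n =>
      p'.1 < p'.2 ∧ (p * Equiv.swap i j) p'.2 < (p * Equiv.swap i j) p'.1) with hF'
  set F := (Finset.univ.filter fun p' : Fin n × Fin n =>
      p'.1 < p'.2 ∧ p p'.2 < p p'.1) with hF
  have hmemF : (i, j) ∈ F := by
    simp only [hF, Finset.mem_filter, Finset.mem_univ, true_and]
    exact ⟨by rw [Fin.lt_def]; omega, hdesc⟩
  have hnotmem : (i, j) ∉ F' := by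
    rw [hF', Finset.mem_filter]
    simp only [hF', Finset.mem_filter, Finset.mem_univ, true_and, Equiv.Perm.mul_apply,
      Equiv.swap_apply_left, Equiv.swap_apply_right]
    intro hc
    exact absurd hc.2 (not_lt.2 (le_of_lt hdesc))
  have key : ∀ q ∈ F', (Equiv.swap i j q.1, Equiv.swap i j q.2) ∈ F.erase (i, j) := by
    rintro ⟨a, b⟩ hq
    have hq' : (a, b) ∈ F'.erase (i, j) := Finset.mem_erase.mpr ⟨fun hc => hnotmem (hc ▸ hq), hq⟩
    have h1 := erase_maps p hij _ hq'
    rw [Finset.mem_erase]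
    refine ⟨?_, h1⟩
    have hqf := hq
    simp only [hF', Finset.mem_filter, Finset.mem_univ, true_and] at hqf
    apply swap_pair_ne hij hqf.1
    intro hc
    exact (Finset.mem_erase.mp hq').1 (Prod.ext (Fin.ext hc.1) (Fin.ext hc.2))
  calc invc (p * Equiv.swap i j) = F'.card := rfl
    _ ≤ (F.erase (i, j)).card := Finset.card_le_card_of_injOn _ key (swap_injOn i j _)
    _ < F.card := Finset.card_erase_lt_of_mem hmemF

lemma eq_one_of_strictMono {n : ℕ} (h : Equiv.Perm (Fin n)) (hm : StrictMono h) : h = 1 := by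
  have : ∀ x : Fin n, h x = x := by
    intro x
    have hx := congrArg (fun f : Fin n ≃o Fin n => f x)
      (Subsingleton.elim
        (⟨(h : Fin n ≃ Fin n), hm.le_iff_le⟩ : Fin n ≃o Fin n) (OrderIso.refl (Fin n)))
    exact hx
  ext x
  simp [this]

/-- every permutation is a product of adjacent transpositions -/
lemma exists_adj_word {n : ℕ} (h : Equiv.Perm (Fin n)) :
    ∃ l : List (Equiv.Perm (Fin n)), l.length = invc h ∧
      (∀ s ∈ l, ∃ i j : Fin n, (i : ℕ) + 1 = (j : ℕ) ∧ s = Equiv.swap i j) ∧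
      h = l.prod := by
  classical
  generalize hk : invc h = k
  induction k using Nat.strong_induction_on generalizing h with
  | _ k ih =>
    by_cases hdesc : ∃ i j : Fin n, (i:ℕ) + 1 = j ∧ h j < h i
    · obtain ⟨i, j, hij, hd⟩ := hdesc
      have hlt := invc_mul_swap_lt h hij hd
      rw [hk] at hlt
      obtain ⟨l, hl1, hl2, hl3⟩ := ih _ hlt (h * Equiv.swap i j) rfl
      have hle : invc h ≤ invc (h * Equiv.swap i j) + 1 := by
        have := invc_mul_swap_le (h * Equiv.swap i j) hij
        rwa [mul_assoc, Equiv.swap_mul_self, mul_one] at this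
      refine ⟨l ++ [Equiv.swap i j], ?_, ?_, ?_⟩
      · rw [List.length_append, hl1, List.length_singleton]
        omega
      · intro s hs
        rcases List.mem_append.mp hs with hs | hs
        · exact hl2 s hs
        · simp only [List.mem_singleton] at hs
          exact ⟨i, j, hij, hs⟩
      · rw [List.prod_append, List.prod_singleton, ← hl3]
        rw [mul_assoc, Equiv.swap_mul_self, mul_one]
    · -- no descent: h strictMono
      push_neg at hdesc
      have hmono : StrictMono h := by
        cases n with
        | zero => intro a; exact absurd a.2 (by omega)
        | succ m =>
          rw [Fin.strictMono_iff_lt_succ]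
          intro i
          have := hdesc i.castSucc i.succ (by simp)
          rcases eq_or_lt_of_le this with heq | hlt
          · exact absurd (h.injective heq)
              (by intro hc; exact absurd (congrArg Fin.val hc) (by simp))
          · exact hlt
      have h1 : h = 1 := eq_one_of_strictMono h hmono
      have hk0 : k = 0 := by
        rw [← hk, h1]
        simp only [invc]
        rw [Finset.card_eq_zero, Finset.filter_eq_empty_iff]
        rintro ⟨a, b⟩ _
        simp only [Equiv.Perm.one_apply, not_and, not_lt]
        exact fun hab => le_of_lt hab
      subst hk0
      exact ⟨[], rfl, by simp, by rw [h1, List.prod_nil]⟩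

lemma invc_one {n : ℕ} : invc (1 : Equiv.Perm (Fin n)) = 0 := by
  simp only [invc]
  rw [Finset.card_eq_zero, Finset.filter_eq_empty_iff]
  rintro ⟨a, b⟩ _
  simp only [Equiv.Perm.one_apply, not_and, not_lt]
  exact fun hab => le_of_lt hab

lemma invc_prod_le {n : ℕ} (l : List (Equiv.Perm (Fin n)))
    (hl : ∀ s ∈ l, ∃ i j : Fin n, (i : ℕ) + 1 = (j : ℕ) ∧ s = Equiv.swap i j) :
    invc l.prod ≤ l.length := by
  induction l using List.reverseRecOn with
  | nil => simp [invc_one]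
  | append_singleton l s ih =>
    obtain ⟨i, j, hij, hs⟩ := hl s (by simp)
    have h1 : invc (l.prod * s) ≤ invc l.prod + 1 := hs ▸ invc_mul_swap_le l.prod hij
    have h2 := ih (fun t ht => hl t (List.mem_append_left _ ht))
    rw [List.prod_append, List.prod_singleton]
    simp only [List.length_append, List.length_singleton]
    omega

lemma invc_le_kendall {n : ℕ} (f g : Equiv.Perm (Fin n)) :
    invc (f⁻¹ * g) ≤ kendall f g := by
  have hne : {m | ∃ l : List (Equiv.Perm (Fin n)), l.length = m ∧
      (∀ s ∈ l, ∃ i j : Fin n, (i : ℕ) + 1 = (j : ℕ) ∧ s = Equiv.swap i j) ∧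
      g = f * l.prod}.Nonempty := by
    obtain ⟨l, hl1, hl2, hl3⟩ := exists_adj_word (f⁻¹ * g)
    exact ⟨l.length, l, rfl, hl2, by rw [← hl3, mul_inv_cancel_left]⟩
  obtain ⟨l, hl1, hl2, hl3⟩ := Nat.sInf_mem hne
  calc invc (f⁻¹ * g) = invc l.prod := by rw [hl3, inv_mul_cancel_left]
    _ ≤ l.length := invc_prod_le l hl2
    _ = kendall f g := hl1

lemma phi_eq_card {n : ℕ} (h : Equiv.Perm (Fin n)) (i : Fin n) :
    phi h i = (Finset.univ.filter fun j => j < i ∧ h⁻¹ i < h⁻¹ j).card := by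
  rw [phi, Set.ncard_eq_toFinset_card']
  congr 1
  ext j
  simp

lemma phi_zero {n : ℕ} (h : Equiv.Perm (Fin n)) (i : Fin n) (hi : (i:ℕ) = 0) :
    phi h i = 0 := by
  rw [phi_eq_card, Finset.card_eq_zero, Finset.filter_eq_empty_iff]
  intro j _
  rw [Fin.lt_def, hi]
  simp

lemma sum_phi {n : ℕ} (h : Equiv.Perm (Fin n)) :
    ∑ i, phi h i = invc h := by
  classical
  have h1 : ∑ i, phi h i =
      (Finset.univ.filter fun p : Fin n × Fin n => p.2 < p.1 ∧ h⁻¹ p.1 < h⁻¹ p.2).card := by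
    rw [Finset.card_eq_sum_card_fiberwise
      (f := fun p : Fin n × Fin n => p.1) (t := Finset.univ) (fun x _ => Finset.mem_univ _)]
    apply Finset.sum_congr rfl
    intro i _
    rw [phi_eq_card]
    apply Finset.card_bij (fun j _ => (i, j))
    · intro j hj
      simp only [Finset.mem_filter, Finset.mem_univ, true_and] at hj ⊢
      exact ⟨⟨hj.1, hj.2⟩, by trivial⟩
    · intro a _ b _ hab
      exact (Prod.mk.injEq _ _ _ _).mp hab |>.2
    · rintro ⟨a, b⟩ hp
      simp only [Finset.mem_filter, Finset.mem_univ, true_and] at hp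
      obtain ⟨⟨h2, h3⟩, h4⟩ := hp
      subst h4
      exact ⟨b, by simpa [h2] using h3, rfl⟩
  rw [h1, invc]
  apply Finset.card_bij (fun p _ => (h⁻¹ p.1, h⁻¹ p.2))
  · rintro ⟨a, b⟩ hp
    simp only [Finset.mem_filter, Finset.mem_univ, true_and] at hp ⊢
    exact ⟨hp.2, by simp [hp.1]⟩
  · rintro ⟨a, b⟩ _ ⟨c, d⟩ _ hab
    simp only [Prod.mk.injEq] at hab ⊢
    exact ⟨h⁻¹.injective hab.1, h⁻¹.injective hab.2⟩
  · rintro ⟨a, b⟩ hp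
    simp only [Finset.mem_filter, Finset.mem_univ, true_and] at hp
    exact ⟨(h a, h b), by simp [hp.1, hp.2], by simp⟩

lemma phi_lt_aux {n : ℕ} (h h' : Equiv.Perm (Fin n)) (i : Fin n)
    (hagree : ∀ j, i < j → h⁻¹ j = h'⁻¹ j) (hlt : h⁻¹ i < h'⁻¹ i) :
    phi h' i < phi h i := by
  classical
  rw [phi_eq_card, phi_eq_card]
  set A := Finset.univ.filter fun j => j < i ∧ h⁻¹ i < h⁻¹ j with hA
  set A' := Finset.univ.filter fun j => j < i ∧ h'⁻¹ i < h'⁻¹ j with hA'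
  set v : Fin n := h (h'⁻¹ i) with hv
  have hvinv : h⁻¹ v = h'⁻¹ i := by simp [hv]
  have hvne : v ≠ i := by
    intro hc
    rw [hc] at hvinv
    exact absurd hvinv (ne_of_lt hlt)
  have hvlt : v < i := by
    rcases lt_or_ge v i with hvi | hvi
    · exact hvi
    · exfalso
      have : i < v := lt_of_le_of_ne hvi (Ne.symm hvne)
      have := hagree v this
      rw [hvinv] at this
      exact hvne (h'⁻¹.injective this.symm)
  have hvA : v ∈ A := by
    simp only [hA, Finset.mem_filter, Finset.mem_univ, true_and]
    exact ⟨hvlt, by rw [hvinv]; exact hlt⟩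
  set φ : Fin n → Fin n := fun j => h (h'⁻¹ j) with hφ
  have hmaps : ∀ j ∈ A', φ j ∈ A.erase v := by
    intro j hj
    simp only [hA', Finset.mem_filter, Finset.mem_univ, true_and] at hj
    obtain ⟨hji, hjp⟩ := hj
    have hφinv : h⁻¹ (φ j) = h'⁻¹ j := by simp [hφ]
    have hne : φ j ≠ v := by
      intro hc
      have : h'⁻¹ j = h'⁻¹ i := by rw [← hφinv, hc, hvinv]
      exact absurd (h'⁻¹.injective this) (ne_of_lt hji)
    have hφne : φ j ≠ i := by
      intro hc
      rw [hc] at hφinv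
      have hx : h⁻¹ i < h'⁻¹ j := lt_trans hlt hjp
      rw [← hφinv] at hx
      exact lt_irrefl _ hx
    have hφlt : φ j < i := by
      rcases lt_or_ge (φ j) i with hc | hc
      · exact hc
      · exfalso
        have hgt : i < φ j := lt_of_le_of_ne hc (Ne.symm hφne)
        have := hagree (φ j) hgt
        rw [hφinv] at this
        have : φ j = j := h'⁻¹.injective this.symm
        rw [this] at hgt
        exact absurd hji (not_lt.2 (le_of_lt hgt))
    rw [Finset.mem_erase]
    refine ⟨hne, ?_⟩
    simp only [hA, Finset.mem_filter, Finset.mem_univ, true_and]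
    refine ⟨hφlt, ?_⟩
    rw [hφinv]
    exact lt_trans hlt hjp
  have hinj : Set.InjOn φ ↑A' := by
    intro x _ y _ hxy
    exact h'⁻¹.injective (h.injective hxy)
  calc A'.card ≤ (A.erase v).card := Finset.card_le_card_of_injOn φ hmaps hinj
    _ < A.card := Finset.card_erase_lt_of_mem hvA

lemma phi_injective {n : ℕ} (h h' : Equiv.Perm (Fin n)) (heq : ∀ i, phi h i = phi h' i) :
    h = h' := by
  classical
  by_contra hne
  have hex : ∃ i, h⁻¹ i ≠ h'⁻¹ i := by
    by_contra hc
    push_neg at hc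
    apply hne
    have : h⁻¹ = h'⁻¹ := Equiv.ext hc
    rw [← inv_inv h, this, inv_inv]
  set S := Finset.univ.filter fun i => h⁻¹ i ≠ h'⁻¹ i with hS
  have hSne : S.Nonempty := by
    obtain ⟨i, hi⟩ := hex
    exact ⟨i, by simpa [hS] using hi⟩
  set i := S.max' hSne with hi
  have hiS : i ∈ S := S.max'_mem hSne
  have hine : h⁻¹ i ≠ h'⁻¹ i := by
    simpa [hS] using hiS
  have hagree : ∀ j, i < j → h⁻¹ j = h'⁻¹ j := by
    intro j hj
    by_contra hc
    have : j ∈ S := by simpa [hS] using hc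
    exact absurd (S.le_max' j this) (not_le.2 hj)
  rcases lt_or_gt_of_ne hine with hlt | hgt
  · exact absurd (heq i) (ne_of_gt (phi_lt_aux h h' i hagree hlt))
  · exact absurd (heq i).symm
      (ne_of_gt (phi_lt_aux h' h i (fun j hj => (hagree j hj).symm) hgt))

lemma card_finsum {α β : Type*} (s : Finset α) (f : α → Multiset β) :
    Multiset.card (∑ i ∈ s, f i) = ∑ i ∈ s, Multiset.card (f i) := by
  classical
  induction s using Finset.induction with
  | empty => simp
  | insert a t hx ih => rw [Finset.sum_insert hx, Finset.sum_insert hx,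
      Multiset.card_add, ih]


/-- ball-size bound `|B_r(n)| ≤ C(n+r−1, n−1)`. -/
theorem stmt2 (n r : ℕ) (hn : 1 ≤ n) (hr : r ≤ n * (n - 1) / 2)
    (f : Equiv.Perm (Fin n)) :
    {g : Equiv.Perm (Fin n) | kendall f g ≤ r}.ncard ≤ (n + r - 1).choose (n - 1) := by
  classical
  set i0 : Fin n := ⟨0, hn⟩ with hi0
  set B := {g : Equiv.Perm (Fin n) | kendall f g ≤ r} with hB
  -- the multiset encoding
  set m : Equiv.Perm (Fin n) → Multiset (Fin n) := fun h =>
    Multiset.replicate (r - invc h) i0 + ∑ i, Multiset.replicate (phi h i) i with hm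
  have hcount : ∀ (h : Equiv.Perm (Fin n)) (i : Fin n), i ≠ i0 →
      Multiset.count i (m h) = phi h i := by
    intro h i hi
    simp only [hm, Multiset.count_add, Multiset.count_sum', Multiset.count_replicate]
    rw [if_neg (Ne.symm hi), zero_add, Finset.sum_ite_eq' Finset.univ i (phi h),
      if_pos (Finset.mem_univ i)]
  have hcard : ∀ h : Equiv.Perm (Fin n), invc h ≤ r → Multiset.card (m h) = r := by
    intro h hh
    simp only [hm, Multiset.card_add, Multiset.card_replicate]
    rw [card_finsum]
    simp only [Multiset.card_replicate]
    rw [sum_phi]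
    omega
  -- injection B → Sym (Fin n) r
  have hkey : ∀ g ∈ B, invc (f⁻¹ * g) ≤ r := fun g hg => le_trans (invc_le_kendall f g) hg
  set Φ : B → Sym (Fin n) r := fun g =>
    ⟨m (f⁻¹ * (g : Equiv.Perm (Fin n))), hcard _ (hkey g g.2)⟩ with hΦ
  have hinj : Function.Injective Φ := by
    rintro ⟨g, hg⟩ ⟨g', hg'⟩ hgg
    have hmm : m (f⁻¹ * g) = m (f⁻¹ * g') := congrArg Subtype.val hgg
    have hphi : ∀ i, phi (f⁻¹ * g) i = phi (f⁻¹ * g') i := by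
      intro i
      by_cases hi : i = i0
      · rw [hi, phi_zero _ _ rfl, phi_zero _ _ rfl]
      · rw [← hcount _ i hi, ← hcount _ i hi, hmm]
    have := phi_injective _ _ hphi
    have : g = g' := by
      have h2 := congrArg (fun x => f * x) this
      simpa [← mul_assoc] using h2
    exact Subtype.ext this
  have hfin : B.Finite := Set.toFinite B
  have h1 : B.ncard ≤ Fintype.card (Sym (Fin n) r) := by
    rw [← Nat.card_coe_set_eq]
    calc Nat.card B ≤ Nat.card (Sym (Fin n) r) := Nat.card_le_card_of_injective Φ hinj
      _ = Fintype.card (Sym (Fin n) r) := Nat.card_eq_fintype_card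
  have h2 : Fintype.card (Sym (Fin n) r) = (n + r - 1).choose (n - 1) := by
    rw [Sym.card_sym_eq_choose, Fintype.card_fin]
    have h3 : n + r - 1 - r = n - 1 := by omega
    rw [← h3, Nat.choose_symm (by omega)]
  calc B.ncard ≤ Fintype.card (Sym (Fin n) r) := h1
    _ = (n + r - 1).choose (n - 1) := h2
end

section
/- Let k ≥ 3 with k or k+1 prime, and let C ⊆ S_{k+2} be the code {f : Φ(f)_{k+j} = ρ_j(f|^{[k]}), j = 1,2} with ρ_j(f) = (Σ_{i=1}^k (2i−1)^j f(i)) mod m (m the prime in {k, k+1}). Then |C| = k! and the map f ↦ f|^{[k]} is a bijection from C onto S_k. -/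
open Finset

/-- The check symbol function of Construction 1 (values and positions in 1-based form). -/
def rho (m k j : ℕ) (h : Equiv.Perm (Fin k)) : ℕ :=
  (∑ i : Fin k, (2 * (i : ℕ) + 1) ^ j * ((h i : ℕ) + 1)) % m

-- auxiliary lemmas

lemma projUp_card {n k : ℕ} (hk : k ≤ n) (f : Equiv.Perm (Fin n)) :
    (Finset.univ.image (fun b : Fin k => f⁻¹ (Fin.castLE hk b))).card = k := by
  rw [Finset.card_image_of_injective _ (fun a b hab => Fin.castLE_injective hk (f⁻¹.injective hab)),
    Finset.card_univ, Fintype.card_fin]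

lemma projUp_aux {n k : ℕ} (hk : k ≤ n) (f : Equiv.Perm (Fin n)) (b : Fin k) :
    ((Finset.univ.image (fun b : Fin k => f⁻¹ (Fin.castLE hk b))).orderIsoOfFin
      (projUp_card hk f) ((projUp hk f).symm b) : Fin n) = f⁻¹ (Fin.castLE hk b) := by
  simp [projUp, Equiv.setCongr, Equiv.subtypeEquivProp, Equiv.subtypeEquiv]; rfl

lemma orderIsoOfFin_congr {n k : ℕ} (s t : Finset (Fin n)) (hs : s.card = k) (ht : t.card = k)
    (x : Fin k) (h : s = t) : (s.orderIsoOfFin hs x : Fin n) = t.orderIsoOfFin ht x := by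
  subst h; rfl

lemma projUp_image (k : ℕ) (f : Equiv.Perm (Fin (k + 2))) :
    Finset.univ.image (fun b : Fin k => f⁻¹ (Fin.castLE (by simp) b)) =
      Finset.univ \ {f⁻¹ ⟨k, by simp⟩, f⁻¹ ⟨k + 1, by simp⟩} := by
  ext x
  simp only [Finset.mem_image, Finset.mem_univ, true_and, Finset.mem_sdiff,
    Finset.mem_insert, Finset.mem_singleton, not_or]
  constructor
  · rintro ⟨b, rfl⟩
    constructor
    · intro hcon
      have := f⁻¹.injective hcon
      have hb := b.isLt
      simp [Fin.ext_iff, Fin.castLE] at this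
      omega
    · intro hcon
      have := f⁻¹.injective hcon
      have hb := b.isLt
      simp [Fin.ext_iff, Fin.castLE] at this
      omega
  · rintro ⟨h1, h2⟩
    have hx1 : f x ≠ ⟨k, by omega⟩ := fun hcon => h1 (by rw [← hcon]; simp)
    have hx2 : f x ≠ ⟨k + 1, by omega⟩ := fun hcon => h2 (by rw [← hcon]; simp)
    have hlt := (f x).isLt
    have hx1' : (f x : ℕ) ≠ k := fun hc => hx1 (Fin.ext hc)
    have hx2' : (f x : ℕ) ≠ k + 1 := fun hc => hx2 (Fin.ext hc)
    refine ⟨⟨(f x : ℕ), by omega⟩, ?_⟩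
    have : Fin.castLE (by omega : k ≤ k + 2) ⟨(f x : ℕ), by omega⟩ = f x := by
      simp [Fin.ext_iff, Fin.castLE]
    rw [this]; simp

set_option maxHeartbeats 1000000 in
lemma perm_eq_of (k : ℕ) (f g : Equiv.Perm (Fin (k + 2)))
    (h1 : projUp (by simp : k ≤ k + 2) f = projUp (by simp) g)
    (h2 : f⁻¹ ⟨k, by simp⟩ = g⁻¹ ⟨k, by simp⟩)
    (h3 : f⁻¹ ⟨k + 1, by simp⟩ = g⁻¹ ⟨k + 1, by simp⟩) : f = g := by
  have hset : Finset.univ.image (fun b : Fin k => f⁻¹ (Fin.castLE (by omega) b)) =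
      Finset.univ.image (fun b : Fin k => g⁻¹ (Fin.castLE (by omega) b)) := by
    rw [projUp_image, projUp_image, h2, h3]
  have hinv : f⁻¹ = g⁻¹ := by
    apply Equiv.ext
    intro x
    by_cases hx : (x : ℕ) < k
    · have hx' : x = Fin.castLE (by omega : k ≤ k + 2) ⟨(x : ℕ), hx⟩ := by
        simp [Fin.ext_iff, Fin.castLE]
      have e1 := projUp_aux (by omega : k ≤ k + 2) f ⟨(x : ℕ), hx⟩
      have e2 := projUp_aux (by omega : k ≤ k + 2) g ⟨(x : ℕ), hx⟩
      have harg : (projUp (by omega : k ≤ k + 2) f).symm ⟨(x : ℕ), hx⟩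
          = (projUp (by omega : k ≤ k + 2) g).symm ⟨(x : ℕ), hx⟩ :=
        congrArg (fun e => e.symm ⟨(x : ℕ), hx⟩) h1
      have mid := congrArg (fun y => (((Finset.univ.image (fun b : Fin k =>
          f⁻¹ (Fin.castLE (by omega : k ≤ k+2) b))).orderIsoOfFin
          (projUp_card (by omega : k ≤ k+2) f) y : Fin (k+2)))) harg
      have mid2 := orderIsoOfFin_congr _ _ (projUp_card (by omega : k ≤ k+2) f)
          (projUp_card (by omega : k ≤ k+2) g)
          ((projUp (by omega : k ≤ k + 2) g).symm ⟨(x : ℕ), hx⟩) hset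
      exact (congrArg (fun z => f⁻¹ z) hx').trans ((e1.symm.trans (mid.trans mid2)).trans
        (e2.trans (congrArg (fun z => g⁻¹ z) hx').symm))
    · have := x.isLt
      rcases (by omega : (x : ℕ) = k ∨ (x : ℕ) = k + 1) with h | h
      · have : x = ⟨k, by omega⟩ := by simp [Fin.ext_iff, h]
        rw [this]; exact h2
      · have : x = ⟨k + 1, by omega⟩ := by simp [Fin.ext_iff, h]
        rw [this]; exact h3
  exact inv_injective hinv

lemma phi_top (k : ℕ) (f : Equiv.Perm (Fin (k + 2))) :
    phi f ⟨k + 1, by simp⟩ + ((f⁻¹ ⟨k + 1, by simp⟩ : Fin (k + 2)) : ℕ) = k + 1 := by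
  have hset : {j : Fin (k + 2) | j < ⟨k + 1, by omega⟩ ∧ f⁻¹ ⟨k + 1, by omega⟩ < f⁻¹ j}
      = f '' Set.Ioi (f⁻¹ ⟨k + 1, by omega⟩) := by
    ext j
    simp only [Set.mem_setOf_eq, Set.mem_image, Set.mem_Ioi]
    constructor
    · rintro ⟨hj1, hj2⟩
      exact ⟨f⁻¹ j, hj2, by simp⟩
    · rintro ⟨p, hp, rfl⟩
      refine ⟨?_, by simpa using hp⟩
      have h1 : f p ≠ ⟨k + 1, by omega⟩ := by
        intro hcon
        rw [← hcon] at hp; simp at hp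
      have h1' : (f p : ℕ) ≠ k + 1 := fun hc => h1 (Fin.ext hc)
      have := (f p).isLt
      show (f p : ℕ) < k + 1
      omega
  rw [phi, hset, Set.ncard_image_of_injective _ f.injective, ← Finset.coe_Ioi,
    Set.ncard_coe_finset, Fin.card_Ioi]
  have := (f⁻¹ (⟨k + 1, by omega⟩ : Fin (k + 2))).isLt
  omega

lemma inv_ne (k : ℕ) (f : Equiv.Perm (Fin (k + 2))) :
    ((f⁻¹ ⟨k, by simp⟩ : Fin (k + 2)) : ℕ) ≠ ((f⁻¹ ⟨k + 1, by simp⟩ : Fin (k + 2)) : ℕ) := by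
  intro hcon
  have := f⁻¹.injective (Fin.ext hcon : (f⁻¹ ⟨k, by omega⟩ : Fin (k+2)) = f⁻¹ ⟨k+1, by omega⟩)
  have := congrArg Fin.val this
  simp at this

lemma phi_k_set (k : ℕ) (f : Equiv.Perm (Fin (k + 2))) :
    {j : Fin (k + 2) | j < ⟨k, by simp⟩ ∧ f⁻¹ ⟨k, by simp⟩ < f⁻¹ j}
      = f '' (Set.Ioi (f⁻¹ ⟨k, by simp⟩) \ {f⁻¹ ⟨k + 1, by simp⟩}) := by
  ext j
  simp only [Set.mem_setOf_eq, Set.mem_image, Set.mem_diff, Set.mem_Ioi, Set.mem_singleton_iff]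
  constructor
  · rintro ⟨hj1, hj2⟩
    refine ⟨f⁻¹ j, ⟨hj2, ?_⟩, by simp⟩
    intro hcon
    have := f⁻¹.injective hcon
    rw [this] at hj1
    rw [Fin.lt_def] at hj1
    simp at hj1
  · rintro ⟨p, ⟨hp1, hp2⟩, rfl⟩
    refine ⟨?_, by simpa using hp1⟩
    have h1 : f p ≠ ⟨k, by omega⟩ := by
      intro hcon; rw [← hcon] at hp1; simp at hp1
    have h2 : f p ≠ ⟨k + 1, by omega⟩ := by
      intro hcon; rw [← hcon] at hp2; simp at hp2
    have h1' : (f p : ℕ) ≠ k := fun hc => h1 (Fin.ext hc)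
    have h2' : (f p : ℕ) ≠ k + 1 := fun hc => h2 (Fin.ext hc)
    have := (f p).isLt
    show (f p : ℕ) < k
    omega

lemma phi_k_lt (k : ℕ) (f : Equiv.Perm (Fin (k + 2)))
    (h : ((f⁻¹ ⟨k, by simp⟩ : Fin (k + 2)) : ℕ) < ((f⁻¹ ⟨k + 1, by simp⟩ : Fin (k + 2)) : ℕ)) :
    phi f ⟨k, by simp⟩ + ((f⁻¹ ⟨k, by simp⟩ : Fin (k + 2)) : ℕ) = k := by
  rw [phi, phi_k_set, Set.ncard_image_of_injective _ f.injective,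
    Set.ncard_diff_singleton_of_mem (Set.mem_Ioi.mpr (Fin.lt_def.mpr h)),
    ← Finset.coe_Ioi, Set.ncard_coe_finset, Fin.card_Ioi]
  have := (f⁻¹ (⟨k + 1, by omega⟩ : Fin (k + 2))).isLt
  omega

lemma phi_k_ge (k : ℕ) (f : Equiv.Perm (Fin (k + 2)))
    (h : ¬ ((f⁻¹ ⟨k, by simp⟩ : Fin (k + 2)) : ℕ) < ((f⁻¹ ⟨k + 1, by simp⟩ : Fin (k + 2)) : ℕ)) :
    phi f ⟨k, by simp⟩ + ((f⁻¹ ⟨k, by simp⟩ : Fin (k + 2)) : ℕ) = k + 1 := by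
  rw [phi, phi_k_set, Set.ncard_image_of_injective _ f.injective,
    Set.diff_singleton_eq_self (fun hc => h (Fin.lt_def.mp (Set.mem_Ioi.mp hc))),
    ← Finset.coe_Ioi, Set.ncard_coe_finset, Fin.card_Ioi]
  have := (f⁻¹ (⟨k, by omega⟩ : Fin (k + 2))).isLt
  omega

lemma phi_k_le (k : ℕ) (f : Equiv.Perm (Fin (k + 2))) : phi f ⟨k, by simp⟩ ≤ k := by
  have hne := inv_ne k f
  rcases Nat.lt_or_ge ((f⁻¹ ⟨k, by omega⟩ : Fin (k + 2)) : ℕ)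
      ((f⁻¹ ⟨k + 1, by omega⟩ : Fin (k + 2)) : ℕ) with h | h
  · have := phi_k_lt k f h; omega
  · have := phi_k_ge k f (by omega); omega

lemma phi_top_le (k : ℕ) (f : Equiv.Perm (Fin (k + 2))) : phi f ⟨k + 1, by simp⟩ ≤ k + 1 := by
  have := phi_top k f; omega

noncomputable def psi (k : ℕ) (f : Equiv.Perm (Fin (k + 2))) :
    Equiv.Perm (Fin k) × Fin (k + 1) × Fin (k + 2) :=
  (projUp (by simp) f, ⟨phi f ⟨k, by simp⟩, by have := phi_k_le k f; omega⟩,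
    ⟨phi f ⟨k + 1, by simp⟩, by have := phi_top_le k f; omega⟩)

lemma psi_inj (k : ℕ) : Function.Injective (psi k) := by
  intro f g h
  rw [psi, psi, Prod.ext_iff, Prod.ext_iff, Fin.ext_iff, Fin.ext_iff] at h
  obtain ⟨h1, h2, h3⟩ := h
  simp only [] at h2 h3
  have htf := phi_top k f
  have htg := phi_top k g
  have h3' : f⁻¹ ⟨k + 1, by omega⟩ = g⁻¹ (⟨k + 1, by omega⟩ : Fin (k + 2)) := by
    apply Fin.ext; omega
  have h2' : f⁻¹ ⟨k, by omega⟩ = g⁻¹ (⟨k, by omega⟩ : Fin (k + 2)) := by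
    apply Fin.ext
    have hnef := inv_ne k f
    have hneg := inv_ne k g
    have htv : ((f⁻¹ ⟨k + 1, by omega⟩ : Fin (k + 2)) : ℕ)
        = ((g⁻¹ ⟨k + 1, by omega⟩ : Fin (k + 2)) : ℕ) := by rw [h3']
    rcases Nat.lt_or_ge ((f⁻¹ ⟨k, by omega⟩ : Fin (k + 2)) : ℕ)
        ((f⁻¹ ⟨k + 1, by omega⟩ : Fin (k + 2)) : ℕ) with hf | hf <;>
      rcases Nat.lt_or_ge ((g⁻¹ ⟨k, by omega⟩ : Fin (k + 2)) : ℕ)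
          ((g⁻¹ ⟨k + 1, by omega⟩ : Fin (k + 2)) : ℕ) with hg | hg
    · have := phi_k_lt k f hf; have := phi_k_lt k g hg; omega
    · have := phi_k_lt k f hf; have := phi_k_ge k g (by omega); omega
    · have := phi_k_ge k f (by omega); have := phi_k_lt k g hg; omega
    · have := phi_k_ge k f (by omega); have := phi_k_ge k g (by omega); omega
  exact perm_eq_of k f g h1 h2' h3'

lemma psi_bij (k : ℕ) : Function.Bijective (psi k) := by
  rw [Fintype.bijective_iff_injective_and_card]
  refine ⟨psi_inj k, ?_⟩
  simp only [Fintype.card_prod, Fintype.card_perm, Fintype.card_fin]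
  rw [Nat.factorial_succ, Nat.factorial_succ]
  ring


/-- Construction 1 yields `k!` codewords, projecting bijectively onto `S_k`. -/
theorem stmt7 (k m : ℕ) (hk : 3 ≤ k) (hm : m = k ∨ m = k + 1) (hp : m.Prime)
    (C : Set (Equiv.Perm (Fin (k + 2))))
    (hC : C = {f : Equiv.Perm (Fin (k + 2)) |
      phi f ⟨k, by omega⟩ = rho m k 1 (projUp (by omega) f) ∧
      phi f ⟨k + 1, by omega⟩ = rho m k 2 (projUp (by omega) f)}) :
    C.ncard = Nat.factorial k ∧
    Set.BijOn (projUp (by omega : k ≤ k + 2)) C Set.univ := by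
  have hm2 : 2 ≤ m := hp.two_le
  have hmle : m ≤ k + 1 := by omega
  have hrho1 : ∀ h : Equiv.Perm (Fin k), rho m k 1 h < k + 1 :=
    fun h => lt_of_lt_of_le (Nat.mod_lt _ (by omega)) hmle
  have hrho2 : ∀ h : Equiv.Perm (Fin k), rho m k 2 h < k + 2 :=
    fun h => lt_of_lt_of_le (Nat.mod_lt _ (by omega)) (by omega)
  let e := Equiv.ofBijective (psi k) (psi_bij k)
  let G : Equiv.Perm (Fin k) → Equiv.Perm (Fin k) × Fin (k + 1) × Fin (k + 2) :=
    fun h => (h, ⟨rho m k 1 h, hrho1 h⟩, ⟨rho m k 2 h, hrho2 h⟩)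
  -- membership characterization
  have hmem : ∀ f : Equiv.Perm (Fin (k + 2)), f ∈ C ↔ psi k f = G (projUp (by omega) f) := by
    intro f
    rw [hC]
    constructor
    · rintro ⟨ha, hb⟩
      simp only [psi, G, Prod.mk.injEq, Fin.mk.injEq]
      exact ⟨trivial, ha, hb⟩
    · intro h
      have h1 : phi f ⟨k, by omega⟩ = rho m k 1 (projUp (by omega) f) :=
        congrArg (fun p => (p.2.1 : ℕ)) h
      have h2 : phi f ⟨k + 1, by omega⟩ = rho m k 2 (projUp (by omega) f) :=
        congrArg (fun p => (p.2.2 : ℕ)) h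
      exact ⟨h1, h2⟩
  have hGmem : ∀ y : Equiv.Perm (Fin k),
      e.symm (G y) ∈ C ∧ projUp (by omega : k ≤ k + 2) (e.symm (G y)) = y := by
    intro y
    have hF : psi k (e.symm (G y)) = G y := e.apply_symm_apply (G y)
    have hproj : projUp (by omega : k ≤ k + 2) (e.symm (G y)) = y := congrArg Prod.fst hF
    refine ⟨?_, hproj⟩
    rw [hmem, hproj]
    exact hF
  have hkey : C = Set.range (fun y => e.symm (G y)) := by
    ext f
    simp only [Set.mem_range]
    constructor
    · intro hf
      refine ⟨projUp (by omega) f, ?_⟩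
      have := (hmem f).mp hf
      rw [← this]
      exact e.symm_apply_apply f
    · rintro ⟨y, rfl⟩
      exact (hGmem y).1
  have hinj : Function.Injective (fun y => e.symm (G y)) := by
    intro a b hab
    have := e.symm.injective hab
    exact congrArg Prod.fst this
  constructor
  · rw [hkey, ← Set.image_univ, Set.ncard_image_of_injective _ hinj, Set.ncard_univ,
      Nat.card_eq_fintype_card, Fintype.card_perm, Fintype.card_fin]
  · refine ⟨fun f _ => Set.mem_univ _, ?_, ?_⟩
    · intro a ha b hb hab
      apply psi_inj k
      rw [(hmem a).mp ha, (hmem b).mp hb]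
      exact congrArg G hab
    · intro y _
      exact ⟨e.symm (G y), (hGmem y).1, (hGmem y).2⟩
end

section
/- For all integers k ≥ 2 and d ≥ 2, the inequality Σ_{i=1}^{d−1} binom(k+i, i)·binom(2d−1−i, d)·2^{d−i−1} < (k+d)!/k! holds. -/
open Finset

lemma factAux (a b m : ℕ) (h : a ≤ b) :
    (a + m).factorial * b.factorial ≤ a.factorial * (b + m).factorial := by
  induction m with
  | zero => simp [mul_comm]
  | succ m ih =>
    calc (a + (m + 1)).factorial * b.factorial
        = (a + m + 1) * ((a + m).factorial * b.factorial) := by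
          rw [show a + (m + 1) = (a + m) + 1 by ring, Nat.factorial_succ]; ring
      _ ≤ (b + m + 1) * (a.factorial * (b + m).factorial) :=
          Nat.mul_le_mul (by omega) ih
      _ = a.factorial * (b + (m + 1)).factorial := by
          rw [show b + (m + 1) = (b + m) + 1 by ring, Nat.factorial_succ]; ring

lemma powLtFact (m : ℕ) : (m + 19) * 2 ^ (3 * m + 56) < (m + 20).factorial := by
  induction m with
  | zero => norm_num [show (20:ℕ).factorial = 2432902008176640000 by rfl]
  | succ m ih =>
    have h8 : 8 * (m + 20) ≤ (m + 21) * (m + 19) := by nlinarith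
    calc (m + 1 + 19) * 2 ^ (3 * (m + 1) + 56)
        = (8 * (m + 20)) * 2 ^ (3 * m + 56) := by
          rw [show 3 * (m + 1) + 56 = (3 * m + 56) + 3 by ring, pow_add]; ring
      _ ≤ ((m + 21) * (m + 19)) * 2 ^ (3 * m + 56) := Nat.mul_le_mul_right _ h8
      _ = (m + 21) * ((m + 19) * 2 ^ (3 * m + 56)) := by ring
      _ < (m + 21) * (m + 20).factorial := by
          exact Nat.mul_lt_mul_of_le_of_lt (le_refl _) ih (by omega)
      _ = (m + 1 + 20).factorial := by
          rw [show m + 1 + 20 = (m + 20) + 1 by ring, Nat.factorial_succ (m + 20)]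

lemma chooseLeTwoPow (n r : ℕ) : n.choose r ≤ 2 ^ n := by
  rcases le_or_gt r n with h | h
  · calc n.choose r ≤ ∑ i ∈ range (n + 1), n.choose i :=
        Finset.single_le_sum (fun i _ => Nat.zero_le _) (mem_range.2 (by omega))
      _ = 2 ^ n := Nat.sum_range_choose n
  · rw [Nat.choose_eq_zero_of_lt h]; exact Nat.zero_le _

/-- the combinatorial inequality behind Theorem 9. -/
theorem stmt12 (k d : ℕ) (hk : 2 ≤ k) (hd : 2 ≤ d) :
    ∑ i ∈ Finset.Icc 1 (d - 1),
        (k + i).choose i * (2 * d - 1 - i).choose d * 2 ^ (d - i - 1)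
      < (k + d).factorial / k.factorial := by
  have hdvd : k.factorial ∣ (k + d).factorial :=
    Nat.factorial_dvd_factorial (Nat.le_add_right k d)
  rw [Nat.lt_div_iff_mul_lt' hdvd]
  by_cases hsmall : d ≤ 19
  · -- reduce to the case k = 2, then check finitely many values of d
    have hterm : ∀ i ∈ Finset.Icc 1 (d - 1),
        k.factorial * ((k + i).choose i * (2 * d - 1 - i).choose d * 2 ^ (d - i - 1))
            * (d + 2).factorial
          ≤ 2 * ((2 + i).choose i * (2 * d - 1 - i).choose d * 2 ^ (d - i - 1))
            * (k + d).factorial := by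
      intro i hi
      simp only [Finset.mem_Icc] at hi
      have hf := factAux (i + 2) (k + i) (d - i) (by omega)
      rw [show i + 2 + (d - i) = d + 2 by omega,
          show k + i + (d - i) = k + d by omega,
          show (i : ℕ) + 2 = 2 + i by omega] at hf
      -- hf : (d+2)! * (k+i)! ≤ (2+i)! * (k+d)!
      have hfac1 : (k + i).choose i * i.factorial * k.factorial = (k + i).factorial := by
        have h := Nat.choose_mul_factorial_mul_factorial (Nat.le_add_left i k)
        rwa [Nat.add_sub_cancel] at h
      have hfac2 : (2 + i).choose i * i.factorial * 2 = (2 + i).factorial := by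
        have h := Nat.choose_mul_factorial_mul_factorial (Nat.le_add_left i 2)
        rwa [Nat.add_sub_cancel, show Nat.factorial 2 = 2 from rfl] at h
      apply Nat.le_of_mul_le_mul_left _ (Nat.factorial_pos i)
      calc i.factorial * (k.factorial * ((k + i).choose i * (2 * d - 1 - i).choose d
              * 2 ^ (d - i - 1)) * (d + 2).factorial)
          = ((d + 2).factorial * ((k + i).choose i * i.factorial * k.factorial))
              * ((2 * d - 1 - i).choose d * 2 ^ (d - i - 1)) := by ring
        _ = ((d + 2).factorial * (k + i).factorial)
              * ((2 * d - 1 - i).choose d * 2 ^ (d - i - 1)) := by rw [hfac1]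
        _ ≤ ((2 + i).factorial * (k + d).factorial)
              * ((2 * d - 1 - i).choose d * 2 ^ (d - i - 1)) := Nat.mul_le_mul_right _ hf
        _ = (((2 + i).choose i * i.factorial * 2) * (k + d).factorial)
              * ((2 * d - 1 - i).choose d * 2 ^ (d - i - 1)) := by rw [hfac2]
        _ = i.factorial * (2 * ((2 + i).choose i * (2 * d - 1 - i).choose d
              * 2 ^ (d - i - 1)) * (k + d).factorial) := by ring
    have hsum : k.factorial * (∑ i ∈ Finset.Icc 1 (d - 1),
          (k + i).choose i * (2 * d - 1 - i).choose d * 2 ^ (d - i - 1)) * (d + 2).factorial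
        ≤ 2 * (∑ i ∈ Finset.Icc 1 (d - 1),
          (2 + i).choose i * (2 * d - 1 - i).choose d * 2 ^ (d - i - 1)) * (k + d).factorial := by
      rw [Finset.mul_sum, Finset.sum_mul, Finset.mul_sum, Finset.sum_mul]
      exact Finset.sum_le_sum hterm
    have h2 : 2 * (∑ i ∈ Finset.Icc 1 (d - 1),
          (2 + i).choose i * (2 * d - 1 - i).choose d * 2 ^ (d - i - 1))
        < (d + 2).factorial := by
      interval_cases d <;>
        · simp only [Nat.choose_eq_descFactorial_div_factorial]
          decide
    have hlt : k.factorial * (∑ i ∈ Finset.Icc 1 (d - 1),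
          (k + i).choose i * (2 * d - 1 - i).choose d * 2 ^ (d - i - 1)) * (d + 2).factorial
        < (k + d).factorial * (d + 2).factorial := by
      refine lt_of_le_of_lt hsum ?_
      calc 2 * (∑ i ∈ Finset.Icc 1 (d - 1),
              (2 + i).choose i * (2 * d - 1 - i).choose d * 2 ^ (d - i - 1)) * (k + d).factorial
          < (d + 2).factorial * (k + d).factorial :=
            Nat.mul_lt_mul_of_lt_of_le h2 (le_refl _) (Nat.factorial_pos _)
        _ = (k + d).factorial * (d + 2).factorial := by ring
    exact lt_of_mul_lt_mul_right hlt (Nat.zero_le _)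
  · -- large d : crude bound
    push_neg at hsmall
    have hterm : ∀ i ∈ Finset.Icc 1 (d - 1),
        (k + i).choose i * (2 * d - 1 - i).choose d * 2 ^ (d - i - 1)
          ≤ (k + d - 1).choose (d - 1) * (2 ^ (2 * d - 2) * 2 ^ (d - 2)) := by
      intro i hi
      simp only [Finset.mem_Icc] at hi
      have h1 : (k + i).choose i ≤ (k + d - 1).choose (d - 1) := by
        calc (k + i).choose i = (k + i).choose k := Nat.choose_symm_add.symm
          _ ≤ (k + (d - 1)).choose k := Nat.choose_le_choose k (by omega)
          _ = (k + (d - 1)).choose (d - 1) := Nat.choose_symm_add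
          _ = (k + d - 1).choose (d - 1) := by rw [show k + (d - 1) = k + d - 1 by omega]
      have h2 : (2 * d - 1 - i).choose d ≤ 2 ^ (2 * d - 2) :=
        le_trans (Nat.choose_le_choose d (by omega)) (chooseLeTwoPow (2 * d - 2) d)
      have h3 : 2 ^ (d - i - 1) ≤ 2 ^ (d - 2) :=
        Nat.pow_le_pow_right (by norm_num) (by omega)
      calc (k + i).choose i * (2 * d - 1 - i).choose d * 2 ^ (d - i - 1)
          ≤ (k + d - 1).choose (d - 1) * 2 ^ (2 * d - 2) * 2 ^ (d - 2) :=
            Nat.mul_le_mul (Nat.mul_le_mul h1 h2) h3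
        _ = (k + d - 1).choose (d - 1) * (2 ^ (2 * d - 2) * 2 ^ (d - 2)) := by ring
    have hsum : (∑ i ∈ Finset.Icc 1 (d - 1),
          (k + i).choose i * (2 * d - 1 - i).choose d * 2 ^ (d - i - 1))
        ≤ (d - 1) * ((k + d - 1).choose (d - 1) * (2 ^ (2 * d - 2) * 2 ^ (d - 2))) := by
      have h := Finset.sum_le_card_nsmul (Finset.Icc 1 (d - 1)) _ _ hterm
      rwa [Nat.card_Icc, smul_eq_mul, show d - 1 + 1 - 1 = d - 1 by omega] at h
    have hpow : (d - 1) * 2 ^ (3 * d - 4) < d.factorial := by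
      have h := powLtFact (d - 20)
      rwa [show d - 20 + 19 = d - 1 by omega, show 3 * (d - 20) + 56 = 3 * d - 4 by omega,
          show d - 20 + 20 = d by omega] at h
    have hMfac : (k + d - 1).choose (d - 1) * (d - 1).factorial * k.factorial
        = (k + d - 1).factorial := by
      have h := Nat.choose_mul_factorial_mul_factorial (show d - 1 ≤ k + d - 1 by omega)
      rwa [show k + d - 1 - (d - 1) = k by omega] at h
    calc k.factorial * (∑ i ∈ Finset.Icc 1 (d - 1),
            (k + i).choose i * (2 * d - 1 - i).choose d * 2 ^ (d - i - 1))
        ≤ k.factorial * ((d - 1) * ((k + d - 1).choose (d - 1)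
            * (2 ^ (2 * d - 2) * 2 ^ (d - 2)))) := Nat.mul_le_mul_left _ hsum
      _ = ((d - 1) * 2 ^ (3 * d - 4)) * ((k + d - 1).choose (d - 1) * k.factorial) := by
          rw [← pow_add, show 2 * d - 2 + (d - 2) = 3 * d - 4 by omega]; ring
      _ < d.factorial * ((k + d - 1).choose (d - 1) * k.factorial) :=
          Nat.mul_lt_mul_of_lt_of_le hpow (le_refl _)
            (Nat.mul_pos (Nat.choose_pos (by omega)) (Nat.factorial_pos _))
      _ = d * ((k + d - 1).choose (d - 1) * (d - 1).factorial * k.factorial) := by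
          rw [← Nat.mul_factorial_pred (show d ≠ 0 by omega)]; ring
      _ = d * (k + d - 1).factorial := by rw [hMfac]
      _ ≤ (k + d) * (k + d - 1).factorial := Nat.mul_le_mul_right _ (by omega)
      _ = (k + d).factorial := Nat.mul_factorial_pred (by omega)
end

section
/- Let 1 ≤ d ≤ n and 1 ≤ k ≤ ⌈n/d⌉, and let A = {1, 1+d, 1+2d, ..., 1+(k−1)d}. Then the code C = {(f_1,...,f_n) ∈ S_n : {f_1,...,f_k} = A and f_{k+1} < f_{k+2} < ... < f_n} has exactly k! elements and pairwise l∞-distance at least d, where d_∞(f,g) = max_i |f(i)−g(i)|. -/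
open Finset

theorem stmt16_aux (n k d : ℕ) (hd1 : 1 ≤ d) (hjd : ∀ j, j < k → j * d < n)
    (hkn : k ≤ n) :
    ∃ e : {f : Equiv.Perm (Fin n) //
        ((fun i => ((f i : ℕ))) '' {i : Fin n | (i : ℕ) < k} =
          (fun j => j * d) '' {j : ℕ | j < k}) ∧
        ∀ i j : Fin n, k ≤ (i : ℕ) → i < j → f i < f j} ≃
      (Fin k ≃ {x : Fin n // x ∈ Finset.univ.image
          (fun j : Fin k => (⟨(j : ℕ) * d, hjd j j.isLt⟩ : Fin n))}),
      ∀ f (i : Fin k), ((e f) i : Fin n) = f.1 (Fin.castLE hkn i) := by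
  classical
  set A : Finset (Fin n) :=
    Finset.univ.image (fun j : Fin k => (⟨(j : ℕ) * d, hjd j j.isLt⟩ : Fin n)) with hA
  have hmemA : ∀ x : Fin n, x ∈ A ↔ ∃ j, j < k ∧ (x : ℕ) = j * d := by
    intro x
    simp only [hA, Finset.mem_image, Finset.mem_univ, true_and]
    constructor
    · rintro ⟨j, rfl⟩; exact ⟨j, j.isLt, rfl⟩
    · rintro ⟨j, hj, hx⟩
      exact ⟨⟨j, hj⟩, by apply Fin.ext; simp [hx]⟩
  have cardA : A.card = k := by
    rw [hA, Finset.card_image_of_injective, Finset.card_univ, Fintype.card_fin]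
    intro a b hab
    have : (a : ℕ) * d = (b : ℕ) * d := by simpa [Fin.ext_iff] using hab
    exact Fin.ext (Nat.eq_of_mul_eq_mul_right hd1 this)
  have cardB : Aᶜ.card = n - k := by
    rw [Finset.card_compl, cardA, Fintype.card_fin]
  set emb := Finset.orderEmbOfFin Aᶜ cardB with hembdef
  have hmemB : ∀ t, emb t ∈ Aᶜ := fun t => Finset.orderEmbOfFin_mem _ _ _
  have hsub : ∀ i : Fin n, ¬ (i : ℕ) < k → (i : ℕ) - k < n - k := fun i h => by
    have := i.isLt; omega
  -- the backward function
  set F : (Fin k ≃ {x : Fin n // x ∈ A}) → Fin n → Fin n := fun b i =>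
    if h : (i : ℕ) < k then (b ⟨i, h⟩ : Fin n) else emb ⟨(i : ℕ) - k, hsub i h⟩
    with hF
  have Finj : ∀ b, Function.Injective (F b) := by
    intro b i j hij
    by_cases hi : (i : ℕ) < k <;> by_cases hj : (j : ℕ) < k
    · simp only [hF, dif_pos hi, dif_pos hj] at hij
      have h0 := b.injective (Subtype.ext hij)
      have : (i : ℕ) = (j : ℕ) := by simpa [Fin.ext_iff] using h0
      exact Fin.ext this
    · exfalso
      simp only [hF, dif_pos hi, dif_neg hj] at hij
      have h1 : ((b ⟨i, hi⟩ : {x : Fin n // x ∈ A}) : Fin n) ∈ A := (b ⟨i, hi⟩).2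
      have h2 := hmemB ⟨(j : ℕ) - k, hsub j hj⟩
      rw [hij] at h1
      exact (Finset.mem_compl.mp h2) h1
    · exfalso
      simp only [hF, dif_neg hi, dif_pos hj] at hij
      have h1 : ((b ⟨j, hj⟩ : {x : Fin n // x ∈ A}) : Fin n) ∈ A := (b ⟨j, hj⟩).2
      have h2 := hmemB ⟨(i : ℕ) - k, hsub i hi⟩
      rw [← hij] at h1
      exact (Finset.mem_compl.mp h2) h1
    · simp only [hF, dif_neg hi, dif_neg hj] at hij
      have h1 := emb.injective hij
      have : (i : ℕ) - k = (j : ℕ) - k := by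
        simpa [Fin.ext_iff] using h1
      exact Fin.ext (by omega)
  have Fbij : ∀ b, Function.Bijective (F b) :=
    fun b => Finite.injective_iff_bijective.mp (Finj b)
  have Fprop : ∀ b,
      ((fun i => (((Equiv.ofBijective (F b) (Fbij b)) i : ℕ))) ''
          {i : Fin n | (i : ℕ) < k} = (fun j => j * d) '' {j : ℕ | j < k}) ∧
      ∀ i j : Fin n, k ≤ (i : ℕ) → i < j →
        (Equiv.ofBijective (F b) (Fbij b)) i < (Equiv.ofBijective (F b) (Fbij b)) j := by
    intro b
    constructor
    · ext x
      simp only [Set.mem_image, Set.mem_setOf_eq, Equiv.ofBijective_apply]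
      constructor
      · rintro ⟨i, hi, rfl⟩
        have : F b i = (b ⟨i, hi⟩ : Fin n) := by simp [hF, dif_pos hi]
        rw [this]
        obtain ⟨j, hj, hx⟩ := (hmemA _).mp (b ⟨i, hi⟩).2
        exact ⟨j, hj, hx.symm⟩
      · rintro ⟨j, hj, rfl⟩
        have hmem : (⟨j * d, hjd j hj⟩ : Fin n) ∈ A := (hmemA _).mpr ⟨j, hj, rfl⟩
        set i0 : Fin k := b.symm ⟨⟨j * d, hjd j hj⟩, hmem⟩ with hi0
        refine ⟨Fin.castLE hkn i0, i0.isLt, ?_⟩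
        have h1 : F b (Fin.castLE hkn i0) = (b ⟨(Fin.castLE hkn i0 : ℕ), i0.isLt⟩ : Fin n) := by
          simp [hF, dif_pos]
        rw [h1]
        have : (⟨(Fin.castLE hkn i0 : ℕ), i0.isLt⟩ : Fin k) = i0 := rfl
        rw [this, hi0, b.apply_symm_apply]
    · intro i j hki hij
      have hi : ¬ (i : ℕ) < k := by omega
      have hj : ¬ (j : ℕ) < k := by
        have : (i : ℕ) < (j : ℕ) := hij
        omega
      simp only [Equiv.ofBijective_apply, hF, dif_neg hi, dif_neg hj]
      apply emb.strictMono
      have : (i : ℕ) < (j : ℕ) := hij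
      simp only [Fin.mk_lt_mk]
      omega
  have hmemT : ∀ (f : Equiv.Perm (Fin n)),
      ((fun i => ((f i : ℕ))) '' {i : Fin n | (i : ℕ) < k} =
        (fun j => j * d) '' {j : ℕ | j < k}) →
      ∀ i : Fin k, f (Fin.castLE hkn i) ∈ A := by
    intro f hf1 i
    have : ((f (Fin.castLE hkn i) : ℕ)) ∈ (fun j => j * d) '' {j : ℕ | j < k} := by
      rw [← hf1]; exact ⟨Fin.castLE hkn i, i.isLt, rfl⟩
    obtain ⟨j, hj, hx⟩ := this
    exact (hmemA _).mpr ⟨j, hj, hx.symm⟩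
  set T : {f : Equiv.Perm (Fin n) //
      ((fun i => ((f i : ℕ))) '' {i : Fin n | (i : ℕ) < k} =
        (fun j => j * d) '' {j : ℕ | j < k}) ∧
      ∀ i j : Fin n, k ≤ (i : ℕ) → i < j → f i < f j} →
      (Fin k → {x : Fin n // x ∈ A}) := fun f i =>
    ⟨f.1 (Fin.castLE hkn i), hmemT f.1 f.2.1 i⟩ with hT
  have Tbij : ∀ f, Function.Bijective (T f) := by
    intro f
    rw [Fintype.bijective_iff_injective_and_card]
    constructor
    · intro a b hab
      have : f.1 (Fin.castLE hkn a) = f.1 (Fin.castLE hkn b) := congrArg Subtype.val hab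
      exact Fin.castLE_injective hkn (f.1.injective this)
    · simp [cardA]
  refine ⟨⟨fun f => Equiv.ofBijective (T f) (Tbij f),
    fun b => ⟨Equiv.ofBijective (F b) (Fbij b), Fprop b⟩, ?_, ?_⟩, fun f i => rfl⟩
  · -- left inverse
    rintro ⟨f, hf1, hf2⟩
    apply Subtype.ext
    apply Equiv.ext
    intro i
    simp only [Equiv.ofBijective_apply]
    by_cases hi : (i : ℕ) < k
    · simp only [hF, dif_pos hi, Equiv.ofBijective_apply, hT]
      exact congrArg f (Fin.ext rfl)
    · -- tail: strictly monotone with image Aᶜ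
      have hik := i.isLt
      set u : Fin (n - k) → Fin n := fun t => f ⟨k + (t : ℕ), by omega⟩ with hu
      have humem : ∀ t, u t ∈ Aᶜ := by
        intro t
        rw [Finset.mem_compl]
        intro hmem
        obtain ⟨j, hj, hx⟩ := (hmemA _).mp hmem
        have : (j * d) ∈ (fun i => ((f i : ℕ))) '' {i : Fin n | (i : ℕ) < k} := by
          rw [hf1]; exact ⟨j, hj, rfl⟩
        obtain ⟨i', hi', hfi'⟩ := this
        have h4 : f i' = u t := Fin.val_injective (by rw [hx]; exact hfi')
        have h5 := f.injective
          (show f i' = f ⟨k + (t : ℕ), by have := t.isLt; omega⟩ from h4)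
        have h6 : (i' : ℕ) = k + (t : ℕ) := by rw [h5]
        have h7 : (i' : ℕ) < k := hi'
        omega
      have humono : StrictMono u := by
        intro s t hst
        apply hf2
        · simp
        · simp only [Fin.mk_lt_mk]
          omega
      have hueq : u = ⇑(Finset.orderEmbOfFin Aᶜ cardB) :=
        Finset.orderEmbOfFin_unique cardB humem humono
      simp only [hF, dif_neg hi, Equiv.ofBijective_apply]
      rw [hembdef, ← hueq, hu]
      have hval : (⟨k + ((i : ℕ) - k), by have := i.isLt; omega⟩ : Fin n) = i :=
        Fin.ext (show k + ((i : ℕ) - k) = (i : ℕ) by omega)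
      exact congrArg f hval
  · -- right inverse
    intro b
    apply Equiv.ext
    intro i
    apply Subtype.ext
    simp only [Equiv.ofBijective_apply, hT]
    have : ((Fin.castLE hkn i : Fin n) : ℕ) < k := i.isLt
    simp only [Equiv.ofBijective_apply, hF, dif_pos this]
    congr 1

/-- Construction 5, a `[n,k,d]` systematic code in the ℓ∞-metric
for constant distance (values written 0-based: `A = {0, d, 2d, …, (k−1)d}`). -/
theorem stmt16 (n k d : ℕ) (hd1 : 1 ≤ d) (hdn : d ≤ n)
    (hk1 : 1 ≤ k) (hk : k ≤ (n + d - 1) / d)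
    (C : Set (Equiv.Perm (Fin n)))
    (hC : C = {f : Equiv.Perm (Fin n) |
      ((fun i => ((f i : ℕ))) '' {i : Fin n | (i : ℕ) < k} =
        (fun j => j * d) '' {j : ℕ | j < k}) ∧
      ∀ i j : Fin n, k ≤ (i : ℕ) → i < j → f i < f j}) :
    C.ncard = k.factorial ∧
    (∀ f ∈ C, ∀ g ∈ C, f ≠ g → d ≤ dinf f g) := by
  classical
  subst hC
  have hkd : k * d ≤ n + d - 1 := (Nat.le_div_iff_mul_le hd1).mp hk
  have hjd : ∀ j, j < k → j * d < n := by
    intro j hj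
    have h1 : (j + 1) * d ≤ k * d := Nat.mul_le_mul_right d hj
    have h2 : (j + 1) * d = j * d + d := by ring
    omega
  have hkn : k ≤ n := by
    have h1 := hjd (k - 1) (by omega)
    have h2 : k - 1 ≤ (k - 1) * d := Nat.le_mul_of_pos_right _ hd1
    omega
  obtain ⟨e, he⟩ := stmt16_aux n k d hd1 hjd hkn
  -- agreement on head positions forces equality
  have headEq : ∀ (f g : Equiv.Perm (Fin n)) (hf : f ∈ {f : Equiv.Perm (Fin n) |
      ((fun i => ((f i : ℕ))) '' {i : Fin n | (i : ℕ) < k} =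
        (fun j => j * d) '' {j : ℕ | j < k}) ∧
      ∀ i j : Fin n, k ≤ (i : ℕ) → i < j → f i < f j})
      (hg : g ∈ {f : Equiv.Perm (Fin n) |
      ((fun i => ((f i : ℕ))) '' {i : Fin n | (i : ℕ) < k} =
        (fun j => j * d) '' {j : ℕ | j < k}) ∧
      ∀ i j : Fin n, k ≤ (i : ℕ) → i < j → f i < f j}),
      (∀ i : Fin n, (i : ℕ) < k → f i = g i) → f = g := by
    intro f g hf hg hagree
    have : e ⟨f, hf⟩ = e ⟨g, hg⟩ := by
      apply Equiv.ext
      intro i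
      apply Subtype.ext
      rw [he ⟨f, hf⟩ i, he ⟨g, hg⟩ i]
      exact hagree _ i.isLt
    exact congrArg Subtype.val (e.injective this)
  constructor
  · -- cardinality
    rw [← Nat.card_coe_set_eq]
    refine (Nat.card_congr e).trans ?_
    rw [Nat.card_eq_fintype_card]
    have cardA : (Finset.univ.image
        (fun j : Fin k => (⟨(j : ℕ) * d, hjd j j.isLt⟩ : Fin n))).card = k := by
      rw [Finset.card_image_of_injective, Finset.card_univ, Fintype.card_fin]
      intro a b hab
      have : (a : ℕ) * d = (b : ℕ) * d := by simpa [Fin.ext_iff] using hab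
      exact Fin.ext (Nat.eq_of_mul_eq_mul_right hd1 this)
    have : Fintype.card {x : Fin n // x ∈ Finset.univ.image
        (fun j : Fin k => (⟨(j : ℕ) * d, hjd j j.isLt⟩ : Fin n))} = k := by
      rw [Fintype.card_coe, cardA]
    rw [Fintype.card_equiv (Fintype.equivOfCardEq
      (by rw [Fintype.card_fin]; convert this.symm))]
    simp
  · -- distance
    intro f hf g hg hne
    have : ∃ i : Fin n, (i : ℕ) < k ∧ f i ≠ g i := by
      by_contra hcon
      push_neg at hcon
      exact hne (headEq f g hf hg fun i hi => hcon i hi)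
    obtain ⟨i, hik, hfg⟩ := this
    have hfi : ((f i : ℕ)) ∈ (fun j => j * d) '' {j : ℕ | j < k} := by
      rw [← hf.1]; exact ⟨i, hik, rfl⟩
    have hgi : ((g i : ℕ)) ∈ (fun j => j * d) '' {j : ℕ | j < k} := by
      rw [← hg.1]; exact ⟨i, hik, rfl⟩
    obtain ⟨j1, _, h1⟩ := hfi
    obtain ⟨j2, _, h2⟩ := hgi
    have hj12 : j1 ≠ j2 := by
      intro h
      apply hfg
      apply Fin.val_injective
      rw [← h1, ← h2, h]
    have key : (d : ℕ) ≤ (((f i : ℕ) : ℤ) - ((g i : ℕ) : ℤ)).natAbs := by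
      have heq : (((f i : ℕ) : ℤ) - ((g i : ℕ) : ℤ)) = ((j1 : ℤ) - (j2 : ℤ)) * d := by
        rw [← h1, ← h2]; push_cast; ring
      rw [heq, Int.natAbs_mul]
      have h3 : 1 ≤ ((j1 : ℤ) - (j2 : ℤ)).natAbs := by
        rcases Nat.lt_or_ge j1 j2 with h | h
        · omega
        · have : j2 < j1 := by omega
          omega
      calc d = 1 * d := (one_mul d).symm
        _ ≤ ((j1 : ℤ) - (j2 : ℤ)).natAbs * (d : ℤ).natAbs := by
            apply Nat.mul_le_mul h3; simp
    calc d ≤ (((f i : ℕ) : ℤ) - ((g i : ℕ) : ℤ)).natAbs := key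
      _ ≤ dinf f g := by
          unfold dinf
          exact Finset.le_sup (f := fun j : Fin n => ((f j : ℤ) - (g j : ℤ)).natAbs)
            (Finset.mem_univ i)
end

section
/- For 1 ≤ d ≤ n, the code C' = {f ∈ S_n : f(i) ≡ i (mod d) for all i} has size (⌈n/d⌉!)^{n mod d} · (⌊n/d⌋!)^{d − (n mod d)} and minimum l∞-distance at least d. -/
open Finset

namespace Stmt17Aux

/-- Count of `i < n` with `i % d = r`. -/
def cnt (n d r : ℕ) : ℕ := if r < n % d then n / d + 1 else n / d

noncomputable def fibEquiv (n d : ℕ) (hd : 0 < d) (r : Fin d) :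
    {i : Fin n // (i : ℕ) % d = (r : ℕ)} ≃ Fin (cnt n d (r : ℕ)) where
  toFun i := ⟨(i.1 : ℕ) / d, by
    have h1 := Nat.div_add_mod (i.1 : ℕ) d
    have h2 := Nat.div_add_mod n d
    have hi := i.2
    have hlt : (i.1 : ℕ) < n := i.1.2
    have hdiv : (i.1 : ℕ) / d ≤ n / d := Nat.div_le_div_right hlt.le
    have hmul : d * ((i.1 : ℕ) / d) ≤ d * (n / d) := Nat.mul_le_mul_left d hdiv
    unfold cnt
    split
    · omega
    · rename_i hr
      rcases Nat.lt_or_ge ((i.1 : ℕ) / d) (n / d) with h | h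
      · exact h
      · have : d * (n / d) ≤ d * ((i.1 : ℕ) / d) := Nat.mul_le_mul_left d h
        omega⟩
  invFun q := ⟨⟨(q : ℕ) * d + (r : ℕ), by
      have hq := q.2
      have h2 := Nat.div_add_mod n d
      have hr := r.2
      unfold cnt at hq
      split at hq
      · have : (q : ℕ) * d ≤ (n / d) * d := Nat.mul_le_mul_right d (by omega)
        have hc : (n / d) * d = d * (n / d) := Nat.mul_comm _ _
        omega
      · have : (q : ℕ) * d + d ≤ (n / d) * d := by
          calc (q : ℕ) * d + d = ((q : ℕ) + 1) * d := by ring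
          _ ≤ (n / d) * d := Nat.mul_le_mul_right d (by omega)
        have hc : (n / d) * d = d * (n / d) := Nat.mul_comm _ _
        omega⟩, by
      show ((q : ℕ) * d + (r : ℕ)) % d = (r : ℕ)
      rw [Nat.add_comm, Nat.add_mul_mod_self_right, Nat.mod_eq_of_lt r.2]⟩
  left_inv i := by
    ext
    show (i.1 : ℕ) / d * d + (r : ℕ) = (i.1 : ℕ)
    calc (i.1 : ℕ) / d * d + (r : ℕ) = (i.1 : ℕ) / d * d + (i.1 : ℕ) % d := by rw [i.2]
    _ = (i.1 : ℕ) := Nat.div_add_mod' _ _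
  right_inv q := by
    ext
    show ((q : ℕ) * d + (r : ℕ)) / d = (q : ℕ)
    rw [Nat.mul_comm, Nat.mul_add_div hd, Nat.div_eq_of_lt r.2, Nat.add_zero]

variable {n d : ℕ}

def res (hd : 0 < d) (i : Fin n) : Fin d := ⟨(i : ℕ) % d, Nat.mod_lt _ hd⟩

lemma congr_fiber (g : ∀ r : Fin d, Equiv.Perm {i : Fin n // (i : ℕ) % d = (r : ℕ)})
    {r s : Fin d} (h : r = s) (j : Fin n) (hj : (j : ℕ) % d = (r : ℕ))
    (hj' : (j : ℕ) % d = (s : ℕ)) :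
    ((g r ⟨j, hj⟩ : {i : Fin n // (i : ℕ) % d = (r : ℕ)}) : Fin n) =
      ((g s ⟨j, hj'⟩ : {i : Fin n // (i : ℕ) % d = (s : ℕ)}) : Fin n) := by
  subst h; rfl

def app (hd : 0 < d) (g : ∀ r : Fin d, Equiv.Perm {i : Fin n // (i : ℕ) % d = (r : ℕ)})
    (i : Fin n) : Fin n :=
  ((g (res hd i) ⟨i, rfl⟩ : {j : Fin n // (j : ℕ) % d = ((res hd i) : ℕ)}) : Fin n)

lemma app_mod (hd : 0 < d) (g : ∀ r : Fin d, Equiv.Perm {i : Fin n // (i : ℕ) % d = (r : ℕ)})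
    (i : Fin n) : ((app hd g i : Fin n) : ℕ) % d = (i : ℕ) % d :=
  (g (res hd i) ⟨i, rfl⟩).2

lemma app_inv (hd : 0 < d) (g : ∀ r : Fin d, Equiv.Perm {i : Fin n // (i : ℕ) % d = (r : ℕ)})
    (i : Fin n) : app hd (fun r => (g r)⁻¹) (app hd g i) = i := by
  set x := app hd g i with hxdef
  have hx : (x : ℕ) % d = ((res hd i) : ℕ) := app_mod hd g i
  have hres : res hd x = res hd i := by
    apply Fin.ext; exact hx
  unfold app
  rw [congr_fiber (fun r => (g r)⁻¹) hres x rfl hx]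
  have : (⟨x, hx⟩ : {j : Fin n // (j : ℕ) % d = ((res hd i) : ℕ)}) = g (res hd i) ⟨i, rfl⟩ :=
    Subtype.ext rfl
  rw [this, ← Equiv.Perm.mul_apply, inv_mul_cancel, Equiv.Perm.one_apply]

noncomputable def permEquiv (hd : 0 < d) :
    {f : Equiv.Perm (Fin n) // ∀ i : Fin n, ((f i : Fin n) : ℕ) % d = (i : ℕ) % d} ≃
      (∀ r : Fin d, Equiv.Perm {i : Fin n // (i : ℕ) % d = (r : ℕ)}) where
  toFun f r := Equiv.Perm.subtypePerm f.1 (fun x => by rw [f.2 x])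
  invFun g :=
    ⟨{ toFun := app hd g
       invFun := app hd (fun r => (g r)⁻¹)
       left_inv := fun i => app_inv hd g i
       right_inv := fun i => by
         have := app_inv hd (fun r => (g r)⁻¹) i
         simpa using this },
     fun i => app_mod hd g i⟩
  left_inv f := by
    apply Subtype.ext
    apply Equiv.ext
    intro i
    rfl
  right_inv g := by
    funext r
    apply Equiv.ext
    intro x
    apply Subtype.ext
    show app hd g (x : Fin n) = ((g r x : {i : Fin n // (i : ℕ) % d = (r : ℕ)}) : Fin n)
    have hres : res hd (x : Fin n) = r := Fin.ext x.2
    unfold app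
    rw [congr_fiber g hres (x : Fin n) rfl x.2]

end Stmt17Aux

/-- Construction 1 of Tamo–Schwartz (0-based form
`f(i) ≡ i (mod d)`), its size and its minimum ℓ∞-distance. -/
theorem stmt17 (n d : ℕ) (hd1 : 1 ≤ d) (hdn : d ≤ n)
    (C : Set (Equiv.Perm (Fin n)))
    (hC : C = {f : Equiv.Perm (Fin n) | ∀ i : Fin n, (f i : ℕ) % d = (i : ℕ) % d}) :
    C.ncard = ((n + d - 1) / d).factorial ^ (n % d) *
        (n / d).factorial ^ (d - n % d) ∧
    (∀ f ∈ C, ∀ g ∈ C, f ≠ g → d ≤ dinf f g) := by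
  classical
  have hd : 0 < d := hd1
  constructor
  · -- cardinality
    subst hC
    have h0 : ({f : Equiv.Perm (Fin n) | ∀ i : Fin n, (f i : ℕ) % d = (i : ℕ) % d}).ncard
        = Nat.card {f : Equiv.Perm (Fin n) // ∀ i : Fin n, (f i : ℕ) % d = (i : ℕ) % d} :=
      (Nat.card_coe_set_eq _).symm
    rw [h0, Nat.card_congr (Stmt17Aux.permEquiv hd), Nat.card_pi]
    have hcard : ∀ r : Fin d,
        Nat.card (Equiv.Perm {i : Fin n // (i : ℕ) % d = (r : ℕ)}) =
          (Stmt17Aux.cnt n d (r : ℕ)).factorial := by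
      intro r
      rw [Nat.card_eq_fintype_card, Fintype.card_perm]
      congr 1
      rw [← Nat.card_eq_fintype_card, Nat.card_congr (Stmt17Aux.fibEquiv n d hd r),
        Nat.card_eq_fintype_card, Fintype.card_fin]
    rw [Finset.prod_congr rfl (fun r _ => hcard r)]
    have hmod : n % d < d := Nat.mod_lt _ hd
    have hprod : ∏ r : Fin d, (Stmt17Aux.cnt n d (r : ℕ)).factorial =
        (n / d + 1).factorial ^ (n % d) * (n / d).factorial ^ (d - n % d) := by
      calc ∏ r : Fin d, (Stmt17Aux.cnt n d (r : ℕ)).factorial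
          = ∏ r : Fin d, (if (r : ℕ) < n % d then (n / d + 1).factorial
              else (n / d).factorial) := by
            refine Finset.prod_congr rfl fun r _ => ?_
            unfold Stmt17Aux.cnt
            split <;> simp_all
        _ = (n / d + 1).factorial ^
              (Finset.univ.filter (fun r : Fin d => (r : ℕ) < n % d)).card *
            (n / d).factorial ^
              (Finset.univ.filter (fun r : Fin d => ¬ (r : ℕ) < n % d)).card := by
            rw [Finset.prod_ite, Finset.prod_const, Finset.prod_const]
        _ = (n / d + 1).factorial ^ (n % d) * (n / d).factorial ^ (d - n % d) := by
            have hfil : (Finset.univ.filter (fun r : Fin d => (r : ℕ) < n % d)) =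
                Finset.Iio (⟨n % d, hmod⟩ : Fin d) := by
              ext r
              simp [Fin.lt_def]
            have hc1 : (Finset.univ.filter (fun r : Fin d => (r : ℕ) < n % d)).card = n % d := by
              rw [hfil, Fin.card_Iio]
            have hc2 := Finset.card_filter_add_card_filter_not
              (s := (Finset.univ : Finset (Fin d))) (p := fun r : Fin d => (r : ℕ) < n % d)
            rw [Finset.card_univ, Fintype.card_fin] at hc2
            have hc3 : (Finset.univ.filter (fun r : Fin d => ¬ (r : ℕ) < n % d)).card
                = d - n % d := by omega
            rw [hc1, hc3]
    rw [hprod]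
    rcases Nat.eq_zero_or_pos (n % d) with h0' | h0'
    · rw [h0']
      simp
    · have hceil : (n + d - 1) / d = n / d + 1 := by
        have h1 := Nat.div_add_mod n d
        have h2 : d * (n / d + 1) = d * (n / d) + d := by ring
        have h3 : n + d - 1 = d * (n / d + 1) + (n % d - 1) := by omega
        rw [h3, Nat.mul_add_div hd, Nat.div_eq_of_lt (show n % d - 1 < d by omega)]
      rw [hceil]
  · -- distance
    intro f hf g hg hne
    rw [hC] at hf hg
    obtain ⟨i, hi⟩ : ∃ i, f i ≠ g i := by
      by_contra h
      push_neg at h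
      exact hne (Equiv.ext h)
    have h1 : (f i : ℕ) % d = (g i : ℕ) % d := (hf i).trans (hg i).symm
    have h2 : ((f i : ℕ) : ℤ) % (d : ℤ) = ((g i : ℕ) : ℤ) % (d : ℤ) := by
      exact_mod_cast congrArg (Nat.cast : ℕ → ℤ) h1
    have hdvd : (d : ℤ) ∣ ((g i : ℕ) : ℤ) - ((f i : ℕ) : ℤ) := Int.ModEq.dvd h2
    have hne0 : ((f i : ℕ) : ℤ) - ((g i : ℕ) : ℤ) ≠ 0 := by
      intro h
      apply hi
      have : ((f i : ℕ) : ℤ) = ((g i : ℕ) : ℤ) := by omega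
      exact Fin.ext (by exact_mod_cast this)
    have hdvd' : d ∣ (((f i : ℕ) : ℤ) - ((g i : ℕ) : ℤ)).natAbs := by
      have : (d : ℤ) ∣ ((f i : ℕ) : ℤ) - ((g i : ℕ) : ℤ) := by
        obtain ⟨k, hk⟩ := hdvd
        exact ⟨-k, by linarith⟩
      exact Int.ofNat_dvd_right.mp (Int.dvd_natAbs.mpr this)
    have hle : d ≤ (((f i : ℕ) : ℤ) - ((g i : ℕ) : ℤ)).natAbs :=
      Nat.le_of_dvd (Int.natAbs_pos.mpr hne0) hdvd'
    unfold dinf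
    exact le_trans hle (Finset.le_sup (f := fun j : Fin n => ((f j : ℤ) - (g j : ℤ)).natAbs)
      (Finset.mem_univ i))
end
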